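/- For finite-valued random variables X and Y with full-support marginals, ρ_m(X;Y) equals the second largest singular value of the matrix Q with entries Q_{x,y} = p(x,y)/√(p(x)p(y)). -/

import Mathlib

open scoped BigOperators

noncomputable section

/-- `p` is a probability mass function on a finite type. -/
def IsPMF {X : Type*} [Fintype X] (p : X → ℝ) : Prop :=
  (∀ x, 0 ≤ p x) ∧ ∑ x, p x = 1

/-- `p` is a joint probability mass function. -/
def IsJointPMF {X Y : Type*} [Fintype X] [Fintype Y] (p : X → Y → ℝ) : Prop :=
  (∀ x y, 0 ≤ p x y) ∧ ∑ x, ∑ y, p x y = 1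

/-- Hirschfeld–Gebelein–Rényi maximal correlation of a joint pmf `p`. -/
def maxCorr {X Y : Type*} [Fintype X] [Fintype Y] (p : X → Y → ℝ) : ℝ :=
  sSup {c : ℝ | ∃ f : X → ℝ, ∃ g : Y → ℝ,
    (∑ x, ∑ y, p x y * f x) = 0 ∧ (∑ x, ∑ y, p x y * g y) = 0 ∧
    (∑ x, ∑ y, p x y * (f x)^2) = 1 ∧ (∑ x, ∑ y, p x y * (g y)^2) = 1 ∧
    c = ∑ x, ∑ y, p x y * f x * g y}

/-- Relative entropy (KL divergence) between pmfs on a finite type. -/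
def KL {X : Type*} [Fintype X] (r p : X → ℝ) : ℝ :=
  ∑ x, r x * Real.log (r x / p x)

/-- `s*(X;Y)` for input distribution `p` and channel `W`. -/
def sStar {X Y : Type*} [Fintype X] [Fintype Y] (p : X → ℝ) (W : X → Y → ℝ) : ℝ :=
  sSup {c : ℝ | ∃ r : X → ℝ, IsPMF r ∧ r ≠ p ∧
    c = KL (fun y => ∑ x, r x * W x y) (fun y => ∑ x, p x * W x y) / KL r p}

/-- Shannon entropy of a pmf on a finite type. -/
def entropy {X : Type*} [Fintype X] (p : X → ℝ) : ℝ :=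
  ∑ x, Real.negMulLog (p x)

/-- Mutual information of a joint pmf. -/
def mutInfo {X Y : Type*} [Fintype X] [Fintype Y] (p : X → Y → ℝ) : ℝ :=
  entropy (fun x => ∑ y, p x y) + entropy (fun y => ∑ x, p x y)
    - entropy (fun z : X × Y => p z.1 z.2)

end

open scoped Matrix

/-- the maximal correlation equals the second largest singular value of the
matrix `Q` with `Q x y = p(x,y)/√(p(x)p(y))`.  The singular values of `Q` are the square
roots of the eigenvalues of `Q * Qᴴ`, and the second largest value of a finite family `e`
is `sup_{i ≠ j} min (e i) (e j)`. -/
theorem maxCorr_eq_second_singular_value {X Y : Type*} [Fintype X] [DecidableEq X]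
    [Fintype Y] (p : X → Y → ℝ) (hp : IsJointPMF p)
    (hx : ∀ x, 0 < ∑ y, p x y) (hy : ∀ y, 0 < ∑ x, p x y)
    (Q : Matrix X Y ℝ)
    (hQ : ∀ x y, Q x y = p x y / Real.sqrt ((∑ y', p x y') * (∑ x', p x' y))) :
    maxCorr p = sSup {c : ℝ | ∃ i j : X, i ≠ j ∧
      c = min (Real.sqrt ((Matrix.isHermitian_mul_conjTranspose_self Q).eigenvalues i))
              (Real.sqrt ((Matrix.isHermitian_mul_conjTranspose_self Q).eigenvalues j))} := by
  classical
  obtain ⟨hp0, hp1⟩ := hp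
  -- X is nonempty
  cases isEmpty_or_nonempty X with
  | inl hXe => simp at hp1
  | inr hXne => ?_
  by_cases hX : Nontrivial X
  swap
  · -- X is a subsingleton : both sets are empty
    have hsing : Subsingleton X := not_nontrivial_iff_subsingleton.mp hX
    obtain ⟨x₀⟩ := hXne
    have hM : {c : ℝ | ∃ f : X → ℝ, ∃ g : Y → ℝ,
        (∑ x, ∑ y, p x y * f x) = 0 ∧ (∑ x, ∑ y, p x y * g y) = 0 ∧
        (∑ x, ∑ y, p x y * (f x)^2) = 1 ∧ (∑ x, ∑ y, p x y * (g y)^2) = 1 ∧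
        c = ∑ x, ∑ y, p x y * f x * g y} = ∅ := by
      ext cv
      simp only [Set.mem_setOf_eq, Set.mem_empty_iff_false, iff_false, not_exists]
      rintro f g ⟨h1, h2, h3, h4, h5⟩
      rw [Fintype.sum_subsingleton _ x₀] at h1 h3
      rw [← Finset.sum_mul] at h1 h3
      have hf0 : f x₀ = 0 := by
        rcases mul_eq_zero.1 h1 with h | h
        · exact absurd h (hx x₀).ne'
        · exact h
      rw [hf0] at h3
      simp at h3
    have hS : {c : ℝ | ∃ i j : X, i ≠ j ∧
        c = min (Real.sqrt ((Matrix.isHermitian_mul_conjTranspose_self Q).eigenvalues i))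
            (Real.sqrt ((Matrix.isHermitian_mul_conjTranspose_self Q).eigenvalues j))} = ∅ := by
      ext cv
      simp only [Set.mem_setOf_eq, Set.mem_empty_iff_false, iff_false, not_exists]
      rintro i j ⟨hij, -⟩
      exact hij (Subsingleton.elim i j)
    rw [maxCorr, hM, hS]
  -- Main case: X nontrivial
  set ev : X → ℝ := (Matrix.isHermitian_mul_conjTranspose_self Q).eigenvalues with hev
  have hA : (Q * Qᴴ).IsHermitian := Matrix.isHermitian_mul_conjTranspose_self Q
  set V : X → X → ℝ := fun i x => hA.eigenvectorBasis i x with hV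
  set u : X → ℝ := fun x => Real.sqrt (∑ y, p x y) with hu
  set w : Y → ℝ := fun y => Real.sqrt (∑ x, p x y) with hw
  have hu_pos : ∀ x, 0 < u x := fun x => Real.sqrt_pos.2 (hx x)
  have hw_pos : ∀ y, 0 < w y := fun y => Real.sqrt_pos.2 (hy y)
  have hu_sq : ∀ x, u x ^ 2 = ∑ y, p x y := fun x => Real.sq_sqrt (hx x).le
  have hw_sq : ∀ y, w y ^ 2 = ∑ x, p x y := fun y => Real.sq_sqrt (hy y).le
  have hQ' : ∀ x y, Q x y = p x y / (u x * w y) := by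
    intro x y; rw [hQ x y, Real.sqrt_mul (hx x).le]
  have hQm : ∀ x y, Q x y * (u x * w y) = p x y := by
    intro x y; rw [hQ']; exact div_mul_cancel₀ _ (mul_pos (hu_pos x) (hw_pos y)).ne'
  have sum_u_sq : ∑ x, u x ^ 2 = 1 := by simp_rw [hu_sq]; exact hp1
  have sum_w_sq : ∑ y, w y ^ 2 = 1 := by simp_rw [hw_sq]; rw [Finset.sum_comm]; exact hp1
  have hQu : ∀ y, ∑ x, Q x y * u x = w y := by
    intro y
    have h1 : ∀ x, Q x y * u x = p x y / w y := by
      intro x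
      have e1 := (hu_pos x).ne'
      have e2 := (hw_pos y).ne'
      rw [hQ']
      field_simp
    simp_rw [h1]
    rw [← Finset.sum_div, ← hw_sq y, sq, mul_div_assoc, div_self (hw_pos y).ne', mul_one]
  have hQw : ∀ x, ∑ y, Q x y * w y = u x := by
    intro x
    have h1 : ∀ y, Q x y * w y = p x y / u x := by
      intro y
      have e1 := (hu_pos x).ne'
      have e2 := (hw_pos y).ne'
      rw [hQ']
      field_simp
    simp_rw [h1]
    rw [← Finset.sum_div, ← hu_sq x, sq, mul_div_assoc, div_self (hu_pos x).ne', mul_one]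
  have hAentry : ∀ x x', (Q * Qᴴ) x x' = ∑ y, Q x y * Q x' y := by
    intro x x'; rw [Matrix.mul_apply]; simp [Matrix.conjTranspose_apply]
  have horth : ∀ i j, ∑ x, V i x * V j x = if i = j then 1 else 0 := by
    intro i j
    have h := hA.eigenvectorBasis.orthonormal
    rw [orthonormal_iff_ite] at h
    have h2 := h i j
    rw [← h2]
    simp [PiLp.inner_apply, RCLike.inner_apply, starRingEnd_apply]
    exact Finset.sum_congr rfl fun x _ => mul_comm _ _
  have hexp : ∀ (φ : X → ℝ) (x : X), φ x = ∑ i, (∑ x', V i x' * φ x') * V i x := by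
    intro φ x
    have h := hA.eigenvectorBasis.sum_repr' (WithLp.toLp 2 φ)
    have h3 := congrFun (congrArg (fun f : EuclideanSpace ℝ X => (f : X → ℝ)) h) x
    simp only [PiLp.inner_apply, RCLike.inner_apply, starRingEnd_apply, star_trivial] at h3
    rw [← h3]
    rw [show ((∑ i : X, (∑ x', φ x' * (hA.eigenvectorBasis i x')) • hA.eigenvectorBasis i :
        EuclideanSpace ℝ X) : X → ℝ) x = ∑ i : X, ((∑ x', φ x' * (hA.eigenvectorBasis i x')) •
        hA.eigenvectorBasis i : EuclideanSpace ℝ X) x from by rw [WithLp.ofLp_sum]; exact Finset.sum_apply x _ _]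
    simp [hV, mul_comm]
  have heig : ∀ i x, ∑ x', (Q * Qᴴ) x x' * V i x' = ev i * V i x := by
    intro i x
    have h := congrFun (hA.mulVec_eigenvectorBasis i) x
    simp only [Matrix.mulVec, dotProduct, Pi.smul_apply, smul_eq_mul] at h
    exact h
  have hinner : ∀ φ ψ : X → ℝ,
      ∑ x, ψ x * φ x = ∑ i, (∑ x, V i x * ψ x) * (∑ x, V i x * φ x) := by
    intro φ ψ
    calc ∑ x, ψ x * φ x = ∑ x, ψ x * ∑ i, (∑ x', V i x' * φ x') * V i x := by
          refine Finset.sum_congr rfl fun x _ => ?_; rw [← hexp φ x]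
      _ = ∑ x, ∑ i, (∑ x', V i x' * φ x') * (ψ x * V i x) := by
          refine Finset.sum_congr rfl fun x _ => ?_
          rw [Finset.mul_sum]
          exact Finset.sum_congr rfl fun i _ => by ring
      _ = ∑ i, ∑ x, (∑ x', V i x' * φ x') * (ψ x * V i x) := Finset.sum_comm
      _ = ∑ i, (∑ x, V i x * ψ x) * (∑ x, V i x * φ x) := by
          refine Finset.sum_congr rfl fun i _ => ?_
          rw [← Finset.mul_sum, mul_comm]
          congr 1
          exact Finset.sum_congr rfl fun x _ => mul_comm _ _
  have hpar : ∀ φ : X → ℝ, ∑ i, (∑ x, V i x * φ x)^2 = ∑ x, φ x^2 := by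
    intro φ
    have h := (hinner φ φ).symm
    simpa only [sq] using h
  have hAφ : ∀ (φ : X → ℝ) (x : X), ∑ x', (Q * Qᴴ) x x' * φ x'
      = ∑ i, (∑ z, V i z * φ z) * (ev i * V i x) := by
    intro φ x
    calc ∑ x', (Q * Qᴴ) x x' * φ x'
        = ∑ x', (Q * Qᴴ) x x' * ∑ i, (∑ z, V i z * φ z) * V i x' := by
          refine Finset.sum_congr rfl fun x' _ => ?_; rw [← hexp φ x']
      _ = ∑ x', ∑ i, (∑ z, V i z * φ z) * ((Q * Qᴴ) x x' * V i x') := by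
          refine Finset.sum_congr rfl fun x' _ => ?_
          rw [Finset.mul_sum]
          exact Finset.sum_congr rfl fun i _ => by ring
      _ = ∑ i, ∑ x', (∑ z, V i z * φ z) * ((Q * Qᴴ) x x' * V i x') := Finset.sum_comm
      _ = ∑ i, (∑ z, V i z * φ z) * (ev i * V i x) := by
          refine Finset.sum_congr rfl fun i _ => ?_
          rw [← Finset.mul_sum, heig i x]
  have hQQ : ∀ φ : X → ℝ,
      ∑ y, (∑ x, Q x y * φ x)^2 = ∑ x, φ x * ∑ x', (Q * Qᴴ) x x' * φ x' := by
    intro φ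
    calc ∑ y, (∑ x, Q x y * φ x)^2
        = ∑ y, ∑ x, ∑ x', (Q x y * φ x) * (Q x' y * φ x') := by
          refine Finset.sum_congr rfl fun y _ => ?_
          rw [sq, Finset.sum_mul_sum]
      _ = ∑ x, ∑ y, ∑ x', (Q x y * φ x) * (Q x' y * φ x') := Finset.sum_comm
      _ = ∑ x, ∑ x', ∑ y, (Q x y * φ x) * (Q x' y * φ x') :=
          Finset.sum_congr rfl fun x _ => Finset.sum_comm
      _ = ∑ x, φ x * ∑ x', (Q * Qᴴ) x x' * φ x' := by
          refine Finset.sum_congr rfl fun x _ => ?_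
          rw [Finset.mul_sum]
          refine Finset.sum_congr rfl fun x' _ => ?_
          rw [hAentry, Finset.sum_mul, Finset.mul_sum]
          exact Finset.sum_congr rfl fun y _ => by ring
  have hAq : ∀ φ : X → ℝ,
      ∑ y, (∑ x, Q x y * φ x)^2 = ∑ i, ev i * (∑ x, V i x * φ x)^2 := by
    intro φ
    rw [hQQ φ]
    calc ∑ x, φ x * ∑ x', (Q * Qᴴ) x x' * φ x'
        = ∑ x, ∑ i, (∑ z, V i z * φ z) * (ev i * (V i x * φ x)) := by
          refine Finset.sum_congr rfl fun x _ => ?_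
          rw [hAφ φ x, Finset.mul_sum]
          exact Finset.sum_congr rfl fun i _ => by ring
      _ = ∑ i, ∑ x, (∑ z, V i z * φ z) * (ev i * (V i x * φ x)) := Finset.sum_comm
      _ = ∑ i, ev i * (∑ x, V i x * φ x)^2 := by
          refine Finset.sum_congr rfl fun i _ => ?_
          rw [← Finset.mul_sum, ← Finset.mul_sum, sq]
          ring
  have hAu : ∀ x, ∑ x', (Q * Qᴴ) x x' * u x' = u x := by
    intro x
    calc ∑ x', (Q * Qᴴ) x x' * u x' = ∑ x', ∑ y, Q x y * (Q x' y * u x') := by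
          refine Finset.sum_congr rfl fun x' _ => ?_
          rw [hAentry, Finset.sum_mul]
          exact Finset.sum_congr rfl fun y _ => by ring
      _ = ∑ y, ∑ x', Q x y * (Q x' y * u x') := Finset.sum_comm
      _ = ∑ y, Q x y * w y := by
          refine Finset.sum_congr rfl fun y _ => ?_
          rw [← Finset.mul_sum, hQu y]
      _ = u x := hQw x
  have hAsym : ∀ x x', (Q * Qᴴ) x x' = (Q * Qᴴ) x' x := by
    intro x x'; rw [hAentry, hAentry]; exact Finset.sum_congr rfl fun y _ => mul_comm _ _
  have hlam1 : ∀ i, ev i * (∑ x, V i x * u x) = ∑ x, V i x * u x := by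
    intro i
    calc ev i * (∑ x, V i x * u x)
        = ∑ x, (∑ x', (Q * Qᴴ) x x' * V i x') * u x := by
          rw [Finset.mul_sum]
          exact Finset.sum_congr rfl fun x _ => by rw [heig i x]; ring
      _ = ∑ x, ∑ x', V i x' * ((Q * Qᴴ) x' x * u x) := by
          refine Finset.sum_congr rfl fun x _ => ?_
          rw [Finset.sum_mul]
          exact Finset.sum_congr rfl fun x' _ => by rw [hAsym x x']; ring
      _ = ∑ x', V i x' * ∑ x, (Q * Qᴴ) x' x * u x := by
          rw [Finset.sum_comm]
          exact Finset.sum_congr rfl fun x' _ => by rw [Finset.mul_sum]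
      _ = ∑ x', V i x' * u x' := by
          refine Finset.sum_congr rfl fun x' _ => ?_
          rw [hAu x']
  have hd_par : ∑ i, (∑ x, V i x * u x) ^ 2 = 1 := by rw [hpar u]; exact sum_u_sq
  have hev1 : ∀ i, (∑ x, V i x * u x) ≠ 0 → ev i = 1 := by
    intro i hne
    have h' := hlam1 i
    have h2 : (ev i - 1) * (∑ x, V i x * u x) = 0 := by linear_combination h'
    rcases mul_eq_zero.1 h2 with h3 | h3
    · linarith
    · exact absurd h3 hne
  have hev_eq : ∀ i, ev i = ∑ y, (∑ x, Q x y * V i x)^2 := by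
    intro i
    rw [hAq (V i)]
    have h1 : ∀ j, ev j * (∑ x, V j x * V i x)^2 = if j = i then ev i else 0 := by
      intro j
      rw [horth j i]
      split
      · next hji => rw [hji]; norm_num
      · norm_num
    simp_rw [h1]
    simp
  have hev_nonneg : ∀ i, 0 ≤ ev i := fun i =>
    (hev_eq i) ▸ Finset.sum_nonneg fun y _ => sq_nonneg _
  have hbound : ∀ φ : X → ℝ, ∑ y, (∑ x, Q x y * φ x)^2 ≤ ∑ x, φ x^2 := by
    intro φ
    have per : ∀ y, (∑ x, Q x y * φ x)^2 ≤ ∑ x, φ x^2 * (p x y / u x ^ 2) := by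
      intro y
      have h1 : ∀ x, Q x y * φ x
          = Real.sqrt (p x y) * (φ x * Real.sqrt (p x y) / (u x * w y)) := by
        intro x
        have e0 := Real.mul_self_sqrt (hp0 x y)
        have e1 := (hu_pos x).ne'
        have e2 := (hw_pos y).ne'
        rw [hQ' x y]
        field_simp
        linear_combination (-(φ x)) * e0
      calc (∑ x, Q x y * φ x)^2
          = (∑ x, Real.sqrt (p x y) * (φ x * Real.sqrt (p x y) / (u x * w y)))^2 := by
            rw [Finset.sum_congr rfl fun x _ => h1 x]
        _ ≤ (∑ x, Real.sqrt (p x y)^2)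
              * ∑ x, (φ x * Real.sqrt (p x y) / (u x * w y))^2 :=
            Finset.sum_mul_sq_le_sq_mul_sq _ _ _
        _ = (w y)^2 * ∑ x, (φ x * Real.sqrt (p x y) / (u x * w y))^2 := by
            rw [Finset.sum_congr rfl fun x _ => Real.sq_sqrt (hp0 x y), ← hw_sq y]
        _ = ∑ x, φ x^2 * (p x y / u x ^ 2) := by
            rw [Finset.mul_sum]
            refine Finset.sum_congr rfl fun x _ => ?_
            have e1 := (hu_pos x).ne'
            have e2 := (hw_pos y).ne'
            rw [div_pow, mul_pow, mul_pow, Real.sq_sqrt (hp0 x y)]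
            field_simp
    calc ∑ y, (∑ x, Q x y * φ x)^2 ≤ ∑ y, ∑ x, φ x^2 * (p x y / u x ^ 2) :=
          Finset.sum_le_sum fun y _ => per y
      _ = ∑ x, ∑ y, φ x^2 * (p x y / u x ^ 2) := Finset.sum_comm
      _ = ∑ x, φ x^2 := by
          refine Finset.sum_congr rfl fun x _ => ?_
          rw [← Finset.mul_sum, ← Finset.sum_div, ← hu_sq x,
            div_self (pow_ne_zero 2 (hu_pos x).ne'), mul_one]
  have hev_le1 : ∀ i, ev i ≤ 1 := by
    intro i
    have h2 : ∑ x, V i x ^ 2 = 1 := by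
      have h3 := horth i i
      simpa [sq] using h3
    rw [hev_eq i]
    exact le_of_le_of_eq (hbound (V i)) h2
  -- second largest eigenvalue
  obtain ⟨x₁, x₂, hx12⟩ := hX
  set P : Finset (X × X) := Finset.univ.filter fun q : X × X => q.1 ≠ q.2 with hP
  have hPne : P.Nonempty := ⟨(x₁, x₂), by simp [hP, hx12]⟩
  set lam2 : ℝ := P.sup' hPne (fun q => min (ev q.1) (ev q.2)) with hlam2
  have hlam2_le : ∀ i j, i ≠ j → min (ev i) (ev j) ≤ lam2 := by
    intro i j hij
    exact Finset.le_sup' (f := fun q : X × X => min (ev q.1) (ev q.2))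
      (by simp [hP, hij] : (i, j) ∈ P)
  obtain ⟨q0, hq0P, hq0⟩ := Finset.exists_mem_eq_sup' hPne (fun q : X × X => min (ev q.1) (ev q.2))
  have hq0' : lam2 = min (ev q0.1) (ev q0.2) := hq0
  have hq0ne : q0.1 ≠ q0.2 := by
    have := hq0P
    simp only [hP, Finset.mem_filter] at this
    exact this.2
  have hlam2_nonneg : 0 ≤ lam2 := by
    rw [hq0']
    exact le_min (hev_nonneg _) (hev_nonneg _)
  have hmono : Monotone Real.sqrt := fun a b h => Real.sqrt_le_sqrt h
  -- the right-hand side equals √lam2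
  have hRHS : sSup {c : ℝ | ∃ i j : X, i ≠ j ∧
      c = min (Real.sqrt (ev i)) (Real.sqrt (ev j))} = Real.sqrt lam2 := by
    apply IsGreatest.csSup_eq
    constructor
    · exact ⟨q0.1, q0.2, hq0ne, by rw [← hmono.map_min, ← hq0']⟩
    · rintro c ⟨i, j, hij, rfl⟩
      rw [← hmono.map_min]
      exact Real.sqrt_le_sqrt (hlam2_le i j hij)
  -- key quadratic form bound
  have hkey : ∀ φ : X → ℝ, (∑ x, φ x ^ 2) = 1 → (∑ x, u x * φ x) = 0 →
      ∑ i, ev i * (∑ x, V i x * φ x) ^ 2 ≤ lam2 := by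
    intro φ hφ1 hφ0
    have hsumcc : ∑ i, (∑ x, V i x * φ x) ^ 2 = 1 := by rw [hpar φ]; exact hφ1
    have hortho : ∑ i, (∑ x, V i x * u x) * (∑ x, V i x * φ x) = 0 := by
      rw [← hinner φ u]; exact hφ0
    have hT1 : ∀ i, lam2 < ev i → ∀ j, lam2 < ev j → i = j := by
      intro i hi j hj
      by_contra hij
      exact absurd (hlam2_le i j hij) (not_le.2 (lt_min hi hj))
    have hccT : ∀ i, lam2 < ev i → (∑ x, V i x * φ x) = 0 := by
      intro i hi
      have hdj : ∀ j, j ≠ i → (∑ x, V j x * u x) = 0 := by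
        intro j hj
        by_contra hdj0
        have hevj : ev j = 1 := hev1 j hdj0
        have hgt : lam2 < ev j := by
          by_contra hle
          push_neg at hle
          have h1 : (1:ℝ) ≤ lam2 := hevj ▸ hle
          linarith [hev_le1 i, hi]
        exact hj (hT1 j hgt i hi)
      have h0 : (∑ x, V i x * u x) * (∑ x, V i x * φ x) = 0 := by
        have h := hortho
        rw [Finset.sum_eq_single_of_mem i (Finset.mem_univ i)
          (fun j _ hj => by rw [hdj j hj]; ring)] at h
        exact h
      have hdi : (∑ x, V i x * u x) ^ 2 = 1 := by
        have h := hd_par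
        rw [Finset.sum_eq_single_of_mem i (Finset.mem_univ i)
          (fun j _ hj => by rw [hdj j hj]; ring)] at h
        exact h
      have hdne : (∑ x, V i x * u x) ≠ 0 := by
        intro h; rw [h] at hdi; norm_num at hdi
      exact (mul_eq_zero.1 h0).resolve_left hdne
    calc ∑ i, ev i * (∑ x, V i x * φ x) ^ 2
        = (∑ i ∈ Finset.univ.filter (fun i => lam2 < ev i), ev i * (∑ x, V i x * φ x) ^ 2)
          + ∑ i ∈ Finset.univ.filter (fun i => ¬ lam2 < ev i), ev i * (∑ x, V i x * φ x) ^ 2 :=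
          (Finset.sum_filter_add_sum_filter_not _ _ _).symm
      _ ≤ 0 + lam2 * 1 := by
          apply add_le_add
          · apply le_of_eq
            apply Finset.sum_eq_zero
            intro i hi
            rw [hccT i (Finset.mem_filter.1 hi).2]
            ring
          · calc ∑ i ∈ Finset.univ.filter (fun i => ¬ lam2 < ev i),
                  ev i * (∑ x, V i x * φ x) ^ 2
                ≤ ∑ i ∈ Finset.univ.filter (fun i => ¬ lam2 < ev i),
                  lam2 * (∑ x, V i x * φ x) ^ 2 :=
                Finset.sum_le_sum fun i hi => mul_le_mul_of_nonneg_right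
                  (not_lt.1 (Finset.mem_filter.1 hi).2) (sq_nonneg _)
              _ = lam2 * ∑ i ∈ Finset.univ.filter (fun i => ¬ lam2 < ev i),
                  (∑ x, V i x * φ x) ^ 2 := (Finset.mul_sum _ _ _).symm
              _ ≤ lam2 * 1 := by
                  apply mul_le_mul_of_nonneg_left _ hlam2_nonneg
                  rw [← hsumcc]
                  exact Finset.sum_le_sum_of_subset_of_nonneg (Finset.filter_subset _ _)
                    (fun i _ _ => sq_nonneg _)
      _ = lam2 := by ring
  -- translation lemmas
  have htrans1 : ∀ φ : X → ℝ, ∑ x, ∑ y, p x y * (φ x / u x) = ∑ x, u x * φ x := by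
    intro φ
    refine Finset.sum_congr rfl fun x _ => ?_
    rw [← Finset.sum_mul, ← hu_sq x]
    have e1 := (hu_pos x).ne'
    field_simp
    all_goals ring
  have htrans3 : ∀ φ : X → ℝ, ∑ x, ∑ y, p x y * (φ x / u x) ^ 2 = ∑ x, φ x ^ 2 := by
    intro φ
    refine Finset.sum_congr rfl fun x _ => ?_
    rw [← Finset.sum_mul, ← hu_sq x]
    have e1 := (hu_pos x).ne'
    field_simp
    all_goals ring
  have htrans2 : ∀ ψ : Y → ℝ, ∑ x, ∑ y, p x y * (ψ y / w y) = ∑ y, w y * ψ y := by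
    intro ψ
    rw [Finset.sum_comm]
    refine Finset.sum_congr rfl fun y _ => ?_
    rw [← Finset.sum_mul, ← hw_sq y]
    have e1 := (hw_pos y).ne'
    field_simp
    all_goals ring
  have htrans4 : ∀ ψ : Y → ℝ, ∑ x, ∑ y, p x y * (ψ y / w y) ^ 2 = ∑ y, ψ y ^ 2 := by
    intro ψ
    rw [Finset.sum_comm]
    refine Finset.sum_congr rfl fun y _ => ?_
    rw [← Finset.sum_mul, ← hw_sq y]
    have e1 := (hw_pos y).ne'
    field_simp
    all_goals ring
  have htransv : ∀ (φ : X → ℝ) (ψ : Y → ℝ), ∑ x, ∑ y, p x y * (φ x / u x) * (ψ y / w y)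
      = ∑ y, (∑ x, Q x y * φ x) * ψ y := by
    intro φ ψ
    calc ∑ x, ∑ y, p x y * (φ x / u x) * (ψ y / w y)
        = ∑ x, ∑ y, Q x y * φ x * ψ y := by
          refine Finset.sum_congr rfl fun x _ => Finset.sum_congr rfl fun y _ => ?_
          have e1 := (hu_pos x).ne'
          have e2 := (hw_pos y).ne'
          rw [← hQm x y]
          field_simp
          all_goals ring
      _ = ∑ y, ∑ x, Q x y * φ x * ψ y := Finset.sum_comm
      _ = ∑ y, (∑ x, Q x y * φ x) * ψ y := by
          refine Finset.sum_congr rfl fun y _ => ?_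
          rw [Finset.sum_mul]
  -- upper bound for the maximal correlation set
  have hub : ∀ cv ∈ {c : ℝ | ∃ f : X → ℝ, ∃ g : Y → ℝ,
      (∑ x, ∑ y, p x y * f x) = 0 ∧ (∑ x, ∑ y, p x y * g y) = 0 ∧
      (∑ x, ∑ y, p x y * (f x)^2) = 1 ∧ (∑ x, ∑ y, p x y * (g y)^2) = 1 ∧
      c = ∑ x, ∑ y, p x y * f x * g y}, cv ≤ Real.sqrt lam2 := by
    rintro cv ⟨f, g, h1, h2, h3, h4, h5⟩
    have ef : ∀ x, f x = (u x * f x) / u x := by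
      intro x
      rw [mul_comm, mul_div_assoc, div_self (hu_pos x).ne', mul_one]
    have eg : ∀ y, g y = (w y * g y) / w y := by
      intro y
      rw [mul_comm, mul_div_assoc, div_self (hw_pos y).ne', mul_one]
    have tf0 : ∑ x, u x * (u x * f x) = 0 := by
      rw [← htrans1 (fun x => u x * f x), ← h1]
      exact Finset.sum_congr rfl fun x _ => Finset.sum_congr rfl fun y _ => by rw [← ef x]
    have tf1 : ∑ x, (u x * f x) ^ 2 = 1 := by
      rw [← htrans3 (fun x => u x * f x), ← h3]
      exact Finset.sum_congr rfl fun x _ => Finset.sum_congr rfl fun y _ => by rw [← ef x]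
    have tg1 : ∑ y, (w y * g y) ^ 2 = 1 := by
      rw [← htrans4 (fun y => w y * g y), ← h4]
      exact Finset.sum_congr rfl fun x _ => Finset.sum_congr rfl fun y _ => by rw [← eg y]
    have hval : cv = ∑ y, (∑ x, Q x y * (u x * f x)) * (w y * g y) := by
      rw [← htransv (fun x => u x * f x) (fun y => w y * g y), h5]
      exact Finset.sum_congr rfl fun x _ => Finset.sum_congr rfl fun y _ => by
        rw [← ef x, ← eg y]
    have hcs := Finset.sum_mul_sq_le_sq_mul_sq Finset.univ
      (fun y => ∑ x, Q x y * (u x * f x)) (fun y => w y * g y)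
    rw [tg1, mul_one] at hcs
    have hsum2 : ∑ y, (∑ x, Q x y * (u x * f x)) ^ 2 ≤ lam2 := by
      rw [hAq (fun x => u x * f x)]
      exact hkey (fun x => u x * f x) tf1 tf0
    calc cv ≤ |cv| := le_abs_self cv
      _ = Real.sqrt (cv ^ 2) := (Real.sqrt_sq_eq_abs cv).symm
      _ ≤ Real.sqrt lam2 := by
          apply Real.sqrt_le_sqrt
          rw [hval]
          exact hcs.trans hsum2
  -- membership from an eigenvector (positive case)
  have hmem_of_eig : ∀ φ : X → ℝ, 0 < lam2 → (∑ x, φ x ^ 2) = 1 → (∑ x, u x * φ x) = 0 →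
      (∀ x, ∑ x', (Q * Qᴴ) x x' * φ x' = lam2 * φ x) →
      ∃ f : X → ℝ, ∃ g : Y → ℝ,
        (∑ x, ∑ y, p x y * f x) = 0 ∧ (∑ x, ∑ y, p x y * g y) = 0 ∧
        (∑ x, ∑ y, p x y * (f x)^2) = 1 ∧ (∑ x, ∑ y, p x y * (g y)^2) = 1 ∧
        Real.sqrt lam2 = ∑ x, ∑ y, p x y * f x * g y := by
    intro φ hpos hunit hperp heigφ
    have hsl : (0:ℝ) < Real.sqrt lam2 := Real.sqrt_pos.2 hpos
    have hsum2 : ∑ y, (∑ x, Q x y * φ x) ^ 2 = lam2 := by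
      rw [hQQ φ]
      calc ∑ x, φ x * ∑ x', (Q * Qᴴ) x x' * φ x' = ∑ x, lam2 * φ x ^ 2 := by
            refine Finset.sum_congr rfl fun x _ => ?_
            rw [heigφ x]; ring
        _ = lam2 := by rw [← Finset.mul_sum, hunit, mul_one]
    have hnum : ∑ y, w y * (∑ x, Q x y * φ x) = 0 := by
      calc ∑ y, w y * ∑ x, Q x y * φ x = ∑ y, ∑ x, φ x * (Q x y * w y) := by
            refine Finset.sum_congr rfl fun y _ => ?_
            rw [Finset.mul_sum]
            exact Finset.sum_congr rfl fun x _ => by ring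
        _ = ∑ x, ∑ y, φ x * (Q x y * w y) := Finset.sum_comm
        _ = ∑ x, φ x * u x := by
            refine Finset.sum_congr rfl fun x _ => ?_
            rw [← Finset.mul_sum, hQw x]
        _ = 0 := by
            rw [← hperp]
            exact Finset.sum_congr rfl fun x _ => mul_comm _ _
    refine ⟨fun x => φ x / u x, fun y => ((∑ x, Q x y * φ x) / Real.sqrt lam2) / w y,
      ?_, ?_, ?_, ?_, ?_⟩
    · rw [htrans1 φ]; exact hperp
    · rw [htrans2 (fun y => (∑ x, Q x y * φ x) / Real.sqrt lam2)]
      calc ∑ y, w y * ((∑ x, Q x y * φ x) / Real.sqrt lam2)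
          = (∑ y, w y * (∑ x, Q x y * φ x)) / Real.sqrt lam2 := by
            rw [Finset.sum_div]
            exact Finset.sum_congr rfl fun y _ => (mul_div_assoc _ _ _).symm
        _ = 0 := by rw [hnum, zero_div]
    · rw [htrans3 φ]; exact hunit
    · rw [htrans4 (fun y => (∑ x, Q x y * φ x) / Real.sqrt lam2)]
      calc ∑ y, ((∑ x, Q x y * φ x) / Real.sqrt lam2) ^ 2
          = (∑ y, (∑ x, Q x y * φ x) ^ 2) / lam2 := by
            rw [Finset.sum_div]
            refine Finset.sum_congr rfl fun y _ => ?_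
            rw [div_pow, Real.sq_sqrt hlam2_nonneg]
        _ = 1 := by rw [hsum2, div_self hpos.ne']
    · rw [htransv φ (fun y => (∑ x, Q x y * φ x) / Real.sqrt lam2)]
      calc Real.sqrt lam2 = lam2 / Real.sqrt lam2 := (Real.div_sqrt).symm
        _ = (∑ y, (∑ x, Q x y * φ x) ^ 2) / Real.sqrt lam2 := by rw [hsum2]
        _ = ∑ y, (∑ x, Q x y * φ x) * ((∑ x, Q x y * φ x) / Real.sqrt lam2) := by
            rw [Finset.sum_div]
            refine Finset.sum_congr rfl fun y _ => ?_
            rw [sq, mul_div_assoc]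
  -- construction of the optimal eigenvector
  have hconstr : ∀ a b : X, a ≠ b → ev b ≤ ev a → lam2 = ev b →
      ∃ φ : X → ℝ, (∑ x, φ x ^ 2) = 1 ∧ (∑ x, u x * φ x) = 0 ∧
        (∀ x, ∑ x', (Q * Qᴴ) x x' * φ x' = lam2 * φ x) := by
    intro a b hab hba hlb
    have sAA : ∑ x, V a x * V a x = 1 := by rw [horth a a]; simp
    have sBB : ∑ x, V b x * V b x = 1 := by rw [horth b b]; simp
    have sAB : ∑ x, V a x * V b x = 0 := by rw [horth a b]; simp [hab]
    by_cases hdb : (∑ x, V b x * u x) = 0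
    · refine ⟨V b, ?_, ?_, ?_⟩
      · calc ∑ x, V b x ^ 2 = ∑ x, V b x * V b x :=
              Finset.sum_congr rfl fun x _ => sq (V b x)
          _ = 1 := sBB
      · calc ∑ x, u x * V b x = ∑ x, V b x * u x :=
              Finset.sum_congr rfl fun x _ => mul_comm _ _
          _ = 0 := hdb
      · intro x
        rw [heig b x, hlb]
    · have hevb : ev b = 1 := hev1 b hdb
      have heva : ev a = 1 := le_antisymm (hev_le1 a) (by rw [← hevb]; exact hba)
      have hl2 : lam2 = 1 := by rw [hlb, hevb]
      set da : ℝ := ∑ x, V a x * u x with hda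
      set db : ℝ := ∑ x, V b x * u x with hdbd
      have hdbpos : 0 < db ^ 2 := lt_of_le_of_ne (sq_nonneg db) (Ne.symm (pow_ne_zero 2 hdb))
      set s : ℝ := da ^ 2 + db ^ 2 with hsdef
      have hs : 0 < s := add_pos_of_nonneg_of_pos (sq_nonneg da) hdbpos
      have hss : (0:ℝ) < Real.sqrt s := Real.sqrt_pos.2 hs
      have hkey2 : ∑ x, (db * V a x - da * V b x) * (db * V a x - da * V b x) = s := by
        calc ∑ x, (db * V a x - da * V b x) * (db * V a x - da * V b x)
            = ∑ x, (db * db * (V a x * V a x) + da * da * (V b x * V b x)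
                - 2 * da * db * (V a x * V b x)) :=
              Finset.sum_congr rfl fun x _ => by ring
          _ = db * db * (∑ x, V a x * V a x) + da * da * (∑ x, V b x * V b x)
                - 2 * da * db * (∑ x, V a x * V b x) := by
              rw [Finset.sum_sub_distrib, Finset.sum_add_distrib, ← Finset.mul_sum,
                ← Finset.mul_sum, ← Finset.mul_sum]
          _ = s := by
              rw [sAA, sBB, sAB, hsdef]; ring
      refine ⟨fun x => (Real.sqrt s)⁻¹ * (db * V a x - da * V b x), ?_, ?_, ?_⟩
      · calc ∑ x, ((Real.sqrt s)⁻¹ * (db * V a x - da * V b x)) ^ 2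
            = ∑ x, ((Real.sqrt s)⁻¹)^2 * ((db * V a x - da * V b x) * (db * V a x - da * V b x)) :=
              Finset.sum_congr rfl fun x _ => by ring
          _ = ((Real.sqrt s)⁻¹)^2 * s := by rw [← Finset.mul_sum, hkey2]
          _ = 1 := by
              rw [← Real.sqrt_inv, Real.sq_sqrt (inv_nonneg.2 hs.le)]
              exact inv_mul_cancel₀ hs.ne'
      · calc ∑ x, u x * ((Real.sqrt s)⁻¹ * (db * V a x - da * V b x))
            = (Real.sqrt s)⁻¹ * (db * (∑ x, V a x * u x) - da * (∑ x, V b x * u x)) := by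
              rw [Finset.mul_sum, Finset.mul_sum, ← Finset.sum_sub_distrib, Finset.mul_sum]
              exact Finset.sum_congr rfl fun x _ => by ring
          _ = 0 := by rw [← hda, ← hdbd]; ring
      · intro x
        calc ∑ x', (Q * Qᴴ) x x' * ((Real.sqrt s)⁻¹ * (db * V a x' - da * V b x'))
            = (Real.sqrt s)⁻¹ * (db * (∑ x', (Q * Qᴴ) x x' * V a x')
                - da * (∑ x', (Q * Qᴴ) x x' * V b x')) := by
              rw [Finset.mul_sum, Finset.mul_sum, ← Finset.sum_sub_distrib, Finset.mul_sum]
              exact Finset.sum_congr rfl fun x' _ => by ring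
          _ = lam2 * ((Real.sqrt s)⁻¹ * (db * V a x - da * V b x)) := by
              rw [heig a x, heig b x, heva, hevb, hl2]; ring
  -- final assembly
  rw [maxCorr, hRHS]
  rcases lt_or_eq_of_le hlam2_nonneg with hposl | hzero
  · -- positive second eigenvalue : the supremum is attained
    have hφex : ∃ φ : X → ℝ, (∑ x, φ x ^ 2) = 1 ∧ (∑ x, u x * φ x) = 0 ∧
        (∀ x, ∑ x', (Q * Qᴴ) x x' * φ x' = lam2 * φ x) := by
      rcases le_total (ev q0.1) (ev q0.2) with h | h
      · exact hconstr q0.2 q0.1 hq0ne.symm h (by rw [hq0']; exact min_eq_left h)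
      · exact hconstr q0.1 q0.2 hq0ne h (by rw [hq0']; exact min_eq_right h)
    obtain ⟨φ, e1, e2, e3⟩ := hφex
    obtain ⟨f, g, c1, c2, c3, c4, c5⟩ := hmem_of_eig φ hposl e1 e2 e3
    exact IsGreatest.csSup_eq ⟨⟨f, g, c1, c2, c3, c4, c5⟩, hub⟩
  · -- lam2 = 0
    by_cases hY : Nontrivial Y
    · -- build a feasible pair with value 0
      obtain ⟨y₁, y₂, hy12⟩ := hY
      set sx : ℝ := u x₁ ^ 2 + u x₂ ^ 2 with hsx
      have hsxpos : 0 < sx := add_pos (pow_pos (hu_pos x₁) 2) (pow_pos (hu_pos x₂) 2)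
      set sy : ℝ := w y₁ ^ 2 + w y₂ ^ 2 with hsy
      have hsypos : 0 < sy := add_pos (pow_pos (hw_pos y₁) 2) (pow_pos (hw_pos y₂) 2)
      set φ : X → ℝ := fun x => (u x₂ * (if x = x₁ then 1 else 0)
        - u x₁ * (if x = x₂ then 1 else 0)) / Real.sqrt sx with hφ
      set ψ : Y → ℝ := fun y => (w y₂ * (if y = y₁ then 1 else 0)
        - w y₁ * (if y = y₂ then 1 else 0)) / Real.sqrt sy with hψ
      have hφunit : ∑ x, φ x ^ 2 = 1 := by
        have e : ∀ x, φ x ^ 2 = ((if x = x₁ then u x₂ ^ 2 else 0)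
            + (if x = x₂ then u x₁ ^ 2 else 0)) / sx := by
          intro x
          simp only [hφ]
          rw [div_pow, Real.sq_sqrt hsxpos.le]
          by_cases h1 : x = x₁ <;> by_cases h2 : x = x₂
          · exact absurd (h1.symm.trans h2) hx12
          all_goals simp [h1, h2, hx12, Ne.symm hx12]
          all_goals ring
        rw [Finset.sum_congr rfl fun x _ => e x, ← Finset.sum_div, Finset.sum_add_distrib,
          Finset.sum_ite_eq' Finset.univ x₁ (fun _ => u x₂ ^ 2),
          Finset.sum_ite_eq' Finset.univ x₂ (fun _ => u x₁ ^ 2)]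
        simp only [Finset.mem_univ, if_true]
        rw [add_comm, ← hsx]
        exact div_self hsxpos.ne'
      have hφperp : ∑ x, u x * φ x = 0 := by
        have e : ∀ x, u x * φ x = ((if x = x₁ then u x₂ * u x else 0)
            - (if x = x₂ then u x₁ * u x else 0)) / Real.sqrt sx := by
          intro x
          simp only [hφ]
          by_cases h1 : x = x₁ <;> by_cases h2 : x = x₂
          · exact absurd (h1.symm.trans h2) hx12
          all_goals simp [h1, h2, hx12, Ne.symm hx12]
          all_goals ring
        rw [Finset.sum_congr rfl fun x _ => e x, ← Finset.sum_div, Finset.sum_sub_distrib,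
          Finset.sum_ite_eq' Finset.univ x₁ (fun x => u x₂ * u x),
          Finset.sum_ite_eq' Finset.univ x₂ (fun x => u x₁ * u x)]
        simp only [Finset.mem_univ, if_true]
        rw [show u x₂ * u x₁ - u x₁ * u x₂ = 0 by ring, zero_div]
      have hψunit : ∑ y, ψ y ^ 2 = 1 := by
        have e : ∀ y, ψ y ^ 2 = ((if y = y₁ then w y₂ ^ 2 else 0)
            + (if y = y₂ then w y₁ ^ 2 else 0)) / sy := by
          intro y
          simp only [hψ]
          rw [div_pow, Real.sq_sqrt hsypos.le]
          by_cases h1 : y = y₁ <;> by_cases h2 : y = y₂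
          · exact absurd (h1.symm.trans h2) hy12
          all_goals simp [h1, h2, hy12, Ne.symm hy12]
          all_goals ring
        rw [Finset.sum_congr rfl fun y _ => e y, ← Finset.sum_div, Finset.sum_add_distrib,
          Finset.sum_ite_eq' Finset.univ y₁ (fun _ => w y₂ ^ 2),
          Finset.sum_ite_eq' Finset.univ y₂ (fun _ => w y₁ ^ 2)]
        simp only [Finset.mem_univ, if_true]
        rw [add_comm, ← hsy]
        exact div_self hsypos.ne'
      have hψperp : ∑ y, w y * ψ y = 0 := by
        have e : ∀ y, w y * ψ y = ((if y = y₁ then w y₂ * w y else 0)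
            - (if y = y₂ then w y₁ * w y else 0)) / Real.sqrt sy := by
          intro y
          simp only [hψ]
          by_cases h1 : y = y₁ <;> by_cases h2 : y = y₂
          · exact absurd (h1.symm.trans h2) hy12
          all_goals simp [h1, h2, hy12, Ne.symm hy12]
          all_goals ring
        rw [Finset.sum_congr rfl fun y _ => e y, ← Finset.sum_div, Finset.sum_sub_distrib,
          Finset.sum_ite_eq' Finset.univ y₁ (fun y => w y₂ * w y),
          Finset.sum_ite_eq' Finset.univ y₂ (fun y => w y₁ * w y)]
        simp only [Finset.mem_univ, if_true]
        rw [show w y₂ * w y₁ - w y₁ * w y₂ = 0 by ring, zero_div]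
      -- the value is 0 because the quadratic form is ≤ lam2 = 0
      have hz : ∀ y, (∑ x, Q x y * φ x) = 0 := by
        have h1 : ∑ y, (∑ x, Q x y * φ x) ^ 2 ≤ 0 := by
          rw [hAq φ, hzero]
          exact hkey φ hφunit hφperp
        have h2 : ∑ y, (∑ x, Q x y * φ x) ^ 2 = 0 :=
          le_antisymm h1 (Finset.sum_nonneg fun y _ => sq_nonneg _)
        intro y
        have h3 := (Finset.sum_eq_zero_iff_of_nonneg fun y _ => sq_nonneg _).1 h2 y
          (Finset.mem_univ y)
        exact pow_eq_zero_iff two_ne_zero |>.1 h3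
      refine IsGreatest.csSup_eq ⟨⟨fun x => φ x / u x, fun y => ψ y / w y, ?_, ?_, ?_, ?_, ?_⟩, hub⟩
      · rw [htrans1 φ]; exact hφperp
      · rw [htrans2 ψ]; exact hψperp
      · rw [htrans3 φ]; exact hφunit
      · rw [htrans4 ψ]; exact hψunit
      · rw [htransv φ ψ, ← hzero, Real.sqrt_zero]
        symm
        apply Finset.sum_eq_zero
        intro y _
        rw [hz y, zero_mul]
    · -- Y is a subsingleton : the maximal-correlation set is empty and lam2 = 0
      haveI hsY : Subsingleton Y := not_nontrivial_iff_subsingleton.mp hY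
      cases isEmpty_or_nonempty Y with
      | inl hYe =>
        have := hx x₁
        simp at this
      | inr hYne => ?_
      obtain ⟨y₀⟩ := hYne
      have hMempty : {c : ℝ | ∃ f : X → ℝ, ∃ g : Y → ℝ,
          (∑ x, ∑ y, p x y * f x) = 0 ∧ (∑ x, ∑ y, p x y * g y) = 0 ∧
          (∑ x, ∑ y, p x y * (f x)^2) = 1 ∧ (∑ x, ∑ y, p x y * (g y)^2) = 1 ∧
          c = ∑ x, ∑ y, p x y * f x * g y} = ∅ := by
        ext cv
        simp only [Set.mem_setOf_eq, Set.mem_empty_iff_false, iff_false, not_exists]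
        rintro f g ⟨h1, h2, h3, h4, h5⟩
        rw [Finset.sum_congr rfl fun x (_ : x ∈ Finset.univ) =>
          Fintype.sum_subsingleton (fun y => p x y * g y) y₀, ← Finset.sum_mul] at h2
        rw [Finset.sum_congr rfl fun x (_ : x ∈ Finset.univ) =>
          Fintype.sum_subsingleton (fun y => p x y * (g y)^2) y₀, ← Finset.sum_mul] at h4
        have hg0 : g y₀ = 0 := by
          rcases mul_eq_zero.1 h2 with h | h
          · exact absurd h (hy y₀).ne'
          · exact h
        rw [hg0] at h4
        simp at h4
      have hlamz : lam2 = 0 := by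
        have hpx : ∀ x, p x y₀ = ∑ y, p x y :=
          fun x => (Fintype.sum_subsingleton (fun y => p x y) y₀).symm
        have hw0 : w y₀ = 1 := by
          have h1 : (∑ x, p x y₀) = 1 := by
            rw [Finset.sum_congr rfl fun x _ => hpx x]; exact hp1
          rw [hw]
          simp only [h1, Real.sqrt_one]
        have hQy0 : ∀ x, Q x y₀ = u x := by
          intro x
          rw [hQ' x y₀, hw0, mul_one, hpx x, ← hu_sq x, sq, mul_div_assoc,
            div_self (hu_pos x).ne', mul_one]
        have hev_d : ∀ i, ev i = (∑ x, V i x * u x) ^ 2 := by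
          intro i
          rw [hev_eq i, Fintype.sum_subsingleton (fun y => (∑ x, Q x y * V i x) ^ 2) y₀]
          congr 1
          refine Finset.sum_congr rfl fun x _ => ?_
          rw [hQy0 x]; ring
        have honce : ∀ i j, i ≠ j → ev i = 0 ∨ ev j = 0 := by
          intro i j hij
          by_contra hcon
          push_neg at hcon
          obtain ⟨hi0, hj0⟩ := hcon
          have hdi : (∑ x, V i x * u x) ≠ 0 := by
            intro h; rw [hev_d i, h] at hi0; simp at hi0
          have hdj : (∑ x, V j x * u x) ≠ 0 := by
            intro h; rw [hev_d j, h] at hj0; simp at hj0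
          have hei : ev i = 1 := hev1 i hdi
          have hej : ev j = 1 := hev1 j hdj
          have h2le : (2:ℝ) ≤ ∑ k, (∑ x, V k x * u x) ^ 2 := by
            calc (2:ℝ) = (∑ x, V i x * u x) ^ 2 + (∑ x, V j x * u x) ^ 2 := by
                  rw [← hev_d i, ← hev_d j, hei, hej]; norm_num
              _ = ∑ k ∈ ({i, j} : Finset X), (∑ x, V k x * u x) ^ 2 :=
                  (Finset.sum_pair (f := fun k => (∑ x, V k x * u x) ^ 2) hij).symm
              _ ≤ ∑ k, (∑ x, V k x * u x) ^ 2 :=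
                  Finset.sum_le_sum_of_subset_of_nonneg (Finset.subset_univ _)
                    (fun k _ _ => sq_nonneg _)
          rw [hd_par] at h2le
          linarith
        rcases honce q0.1 q0.2 hq0ne with h | h
        · rw [hq0', h]
          exact min_eq_left (hev_nonneg _)
        · rw [hq0', h]
          exact min_eq_right (hev_nonneg _)
      rw [hMempty, Real.sSup_empty, hlamz, Real.sqrt_zero]
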